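/- Let J, K ⊆ ℝ be open intervals, μ ≠ 0 a constant, κ, ρ : K → ℝ differentiable functions, and B : J × K → ℝ a C² function. Set A(p,t) = μ(p·ln p − p) + κ(t)·p + ρ(t) and suppose G(p,y,t) = A(p,t) + p·B(y,t) satisfies the G-equation G_{yp}² − G_{yy} G_{pp} − G_{pt} = 0 for all (p,y,t) ∈ (0,∞) × J × K. Then the function β(y,t) = exp(−(B(y,t) + κ(t))/μ) satisfies the backwards heat equation β_t + μ·β_{yy} = 0 on J × K. -/

import Mathlib

/-- Partial derivative of `f : ℝ³ → ℝ` in direction `v`, as a function. -/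
noncomputable def pd (v : ℝ × ℝ × ℝ) (f : ℝ × ℝ × ℝ → ℝ) : ℝ × ℝ × ℝ → ℝ :=
  fun q => fderiv ℝ f q v

/-- ∂/∂p for functions `G(p,y,t)`. -/
noncomputable def px : (ℝ × ℝ × ℝ → ℝ) → ℝ × ℝ × ℝ → ℝ := pd (1, 0, 0)
/-- ∂/∂y. -/
noncomputable def py : (ℝ × ℝ × ℝ → ℝ) → ℝ × ℝ × ℝ → ℝ := pd (0, 1, 0)
/-- ∂/∂t. -/
noncomputable def pt : (ℝ × ℝ × ℝ → ℝ) → ℝ × ℝ × ℝ → ℝ := pd (0, 0, 1)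

/-- Partial derivative of `f : ℝ² → ℝ` in direction `v`, as a function. -/
noncomputable def pd2 (v : ℝ × ℝ) (f : ℝ × ℝ → ℝ) : ℝ × ℝ → ℝ :=
  fun z => fderiv ℝ f z v

/-- Derivative in the first coordinate (i.e. `y` for `B(y,t)` and `β(y,t)`). -/
noncomputable def p1 : (ℝ × ℝ → ℝ) → ℝ × ℝ → ℝ := pd2 (1, 0)
/-- Derivative in the second coordinate (i.e. `t`). -/
noncomputable def p2 : (ℝ × ℝ → ℝ) → ℝ × ℝ → ℝ := pd2 (0, 1)

noncomputable def fst3 : (ℝ × ℝ × ℝ) →L[ℝ] ℝ := ContinuousLinearMap.fst ℝ ℝ (ℝ × ℝ)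
noncomputable def snd3 : (ℝ × ℝ × ℝ) →L[ℝ] (ℝ × ℝ) := ContinuousLinearMap.snd ℝ ℝ (ℝ × ℝ)
noncomputable def t3 : (ℝ × ℝ × ℝ) →L[ℝ] ℝ := (ContinuousLinearMap.snd ℝ ℝ ℝ).comp snd3
noncomputable def snd2 : (ℝ × ℝ) →L[ℝ] ℝ := ContinuousLinearMap.snd ℝ ℝ ℝ

@[simp] lemma fst3_apply (v : ℝ × ℝ × ℝ) : fst3 v = v.1 := rfl
@[simp] lemma snd3_apply (v : ℝ × ℝ × ℝ) : snd3 v = v.2 := rfl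
@[simp] lemma t3_apply (v : ℝ × ℝ × ℝ) : t3 v = v.2.2 := rfl
@[simp] lemma snd2_apply (v : ℝ × ℝ) : snd2 v = v.2 := rfl

/-- If `A(p,t) = μ(p ln p - p) + κ(t) p + ρ(t)` with `μ ≠ 0`, `κ`, `ρ` differentiable
on the open interval `K`, `B(y,t)` is C² on `J × K`, and `G = A + p·B` satisfies the
G-equation `G_{yp}² - G_{yy} G_{pp} - G_{pt} = 0` on `(0,∞) × J × K`, then
`β(y,t) = exp(-(B(y,t) + κ(t))/μ)` satisfies `β_t + μ β_{yy} = 0` on `J × K`. -/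
theorem stmt10 (J K : Set ℝ)
    (hJo : IsOpen J) (hJc : J.OrdConnected)
    (hKo : IsOpen K) (hKc : K.OrdConnected)
    (μ : ℝ) (hμ : μ ≠ 0) (κ ρ : ℝ → ℝ)
    (hκ : DifferentiableOn ℝ κ K) (hρ : DifferentiableOn ℝ ρ K)
    (B : ℝ × ℝ → ℝ) (hB : ContDiffOn ℝ 2 B (J ×ˢ K))
    (hG : ∀ p > (0 : ℝ), ∀ y ∈ J, ∀ t ∈ K,
      let A : ℝ × ℝ → ℝ := fun z => μ * (z.1 * Real.log z.1 - z.1) + κ z.2 * z.1 + ρ z.2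
      let G : ℝ × ℝ × ℝ → ℝ := fun r => A (r.1, r.2.2) + r.1 * B (r.2.1, r.2.2)
      (px (py G) (p, y, t)) ^ 2 - py (py G) (p, y, t) * px (px G) (p, y, t)
        - pt (px G) (p, y, t) = 0) :
    ∀ y ∈ J, ∀ t ∈ K,
      let β : ℝ × ℝ → ℝ := fun z => Real.exp (-(B z + κ z.2) / μ)
      p2 β (y, t) + μ * p1 (p1 β) (y, t) = 0 := by
  have hUo : IsOpen (J ×ˢ K) := hJo.prod hKo
  have hBd : ∀ z ∈ J ×ˢ K, DifferentiableAt ℝ B z := fun z hz =>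
    (hB.contDiffAt (hUo.mem_nhds hz)).differentiableAt (by norm_num)
  have hB1d : ∀ z ∈ J ×ˢ K, DifferentiableAt ℝ (p1 B) z := by
    intro z hz
    have h := (hB.contDiffAt (hUo.mem_nhds hz)).fderiv_right (m := 1) (by norm_num)
    exact (((ContinuousLinearMap.apply ℝ ℝ ((1:ℝ),(0:ℝ))).contDiff.contDiffAt).comp z
      h).differentiableAt one_ne_zero
  have hκd : ∀ t ∈ K, DifferentiableAt ℝ κ t := fun t ht =>
    (hκ t ht).differentiableAt (hKo.mem_nhds ht)
  have hρd : ∀ t ∈ K, DifferentiableAt ℝ ρ t := fun t ht =>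
    (hρ t ht).differentiableAt (hKo.mem_nhds ht)
  set G : ℝ × ℝ × ℝ → ℝ := fun r =>
    (μ * (r.1 * Real.log r.1 - r.1) + κ r.2.2 * r.1 + ρ r.2.2) + r.1 * B (r.2.1, r.2.2)
    with hGdef
  have hGf : ∀ r : ℝ × ℝ × ℝ, 0 < r.1 → r.2 ∈ J ×ˢ K →
      HasFDerivAt G
        (((μ * (Real.log r.1 + 1 - 1)) • fst3)
          + (κ r.2.2 • fst3 + r.1 • (deriv κ r.2.2 • t3))
          + (deriv ρ r.2.2 • t3)
          + (r.1 • ((fderiv ℝ B r.2).comp snd3) + B r.2 • fst3)) r := by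
    intro r hr hz
    have h1 : HasFDerivAt (fun s : ℝ × ℝ × ℝ => μ * (s.1 * Real.log s.1 - s.1))
        ((μ * (Real.log r.1 + 1 - 1)) • fst3) r := by
      have := (((Real.hasDerivAt_mul_log hr.ne').sub (hasDerivAt_id r.1)).const_mul
        μ).comp_hasFDerivAt r fst3.hasFDerivAt
      exact this
    have h2 : HasFDerivAt (fun s : ℝ × ℝ × ℝ => κ s.2.2 * s.1)
        (κ r.2.2 • fst3 + r.1 • (deriv κ r.2.2 • t3)) r := by
      have hk : HasFDerivAt (fun s : ℝ × ℝ × ℝ => κ s.2.2) (deriv κ r.2.2 • t3) r :=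
        (hκd r.2.2 hz.2).hasDerivAt.comp_hasFDerivAt r t3.hasFDerivAt
      exact hk.mul fst3.hasFDerivAt
    have h3 : HasFDerivAt (fun s : ℝ × ℝ × ℝ => ρ s.2.2) (deriv ρ r.2.2 • t3) r :=
      (hρd r.2.2 hz.2).hasDerivAt.comp_hasFDerivAt r t3.hasFDerivAt
    have h4 : HasFDerivAt (fun s : ℝ × ℝ × ℝ => s.1 * B (s.2.1, s.2.2))
        (r.1 • ((fderiv ℝ B r.2).comp snd3) + B r.2 • fst3) r := by
      have hb : HasFDerivAt (fun s : ℝ × ℝ × ℝ => B (s.2.1, s.2.2)) ((fderiv ℝ B r.2).comp snd3) r :=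
        ((hBd r.2 hz).hasFDerivAt).comp r snd3.hasFDerivAt
      exact fst3.hasFDerivAt.mul hb
    exact ((h1.add h2).add h3).add h4
  have hpxG : ∀ r : ℝ × ℝ × ℝ, 0 < r.1 → r.2 ∈ J ×ˢ K →
      px G r = μ * Real.log r.1 + κ r.2.2 + B r.2 := by
    intro r hr hz
    have := (hGf r hr hz).fderiv
    simp only [px, pd, this]
    simp only [ContinuousLinearMap.add_apply, ContinuousLinearMap.coe_smul',
      Pi.smul_apply, fst3_apply, t3_apply, ContinuousLinearMap.coe_comp',
      Function.comp_apply, snd3_apply, smul_eq_mul]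
    norm_num [Prod.mk_zero_zero]
  have hpyG : ∀ r : ℝ × ℝ × ℝ, 0 < r.1 → r.2 ∈ J ×ˢ K →
      py G r = r.1 * p1 B r.2 := by
    intro r hr hz
    have := (hGf r hr hz).fderiv
    simp only [py, pd, this]
    simp only [ContinuousLinearMap.add_apply, ContinuousLinearMap.coe_smul',
      Pi.smul_apply, fst3_apply, t3_apply, ContinuousLinearMap.coe_comp',
      Function.comp_apply, snd3_apply, smul_eq_mul, p1, pd2]
    norm_num
  -- the key PDE for B
  have hE : ∀ y ∈ J, ∀ t ∈ K,
      (p1 B (y,t))^2 - p1 (p1 B) (y,t) * μ - (deriv κ t + p2 B (y,t)) = 0 := by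
    intro y hy t ht
    have hz : (y,t) ∈ J ×ˢ K := ⟨hy, ht⟩
    have hVo : IsOpen {r : ℝ × ℝ × ℝ | 0 < r.1 ∧ r.2 ∈ J ×ˢ K} :=
      IsOpen.inter (isOpen_lt continuous_const continuous_fst) (hUo.preimage continuous_snd)
    have hVmem : {r : ℝ × ℝ × ℝ | 0 < r.1 ∧ r.2 ∈ J ×ˢ K} ∈ nhds ((1:ℝ), y, t) :=
      hVo.mem_nhds ⟨one_pos, hz⟩
    have hpx_ev : px G =ᶠ[nhds ((1:ℝ), y, t)] (fun r => μ * Real.log r.1 + κ r.2.2 + B r.2) :=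
      Filter.eventuallyEq_of_mem hVmem fun r hr => hpxG r hr.1 hr.2
    have hpy_ev : py G =ᶠ[nhds ((1:ℝ), y, t)] (fun r => r.1 * p1 B r.2) :=
      Filter.eventuallyEq_of_mem hVmem fun r hr => hpyG r hr.1 hr.2
    have hφ : HasFDerivAt (fun r : ℝ × ℝ × ℝ => μ * Real.log r.1 + κ r.2.2 + B r.2)
        (((μ * (1:ℝ)⁻¹) • fst3 + deriv κ t • t3) + (fderiv ℝ B (y,t)).comp snd3)
        ((1:ℝ), y, t) := by
      have h1 : HasFDerivAt (fun r : ℝ × ℝ × ℝ => μ * Real.log r.1)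
          ((μ * (1:ℝ)⁻¹) • fst3) ((1:ℝ), y, t) :=
        ((Real.hasDerivAt_log one_ne_zero).const_mul μ).comp_hasFDerivAt (h₂ := fun x => μ * Real.log x) (f := fun r : ℝ × ℝ × ℝ => r.1) ((1:ℝ), y, t) fst3.hasFDerivAt
      have h2 : HasFDerivAt (fun r : ℝ × ℝ × ℝ => κ r.2.2) (deriv κ t • t3) ((1:ℝ), y, t) :=
        (hκd t ht).hasDerivAt.comp_hasFDerivAt ((1:ℝ), y, t) t3.hasFDerivAt
      have h3 : HasFDerivAt (fun r : ℝ × ℝ × ℝ => B r.2) ((fderiv ℝ B (y,t)).comp snd3)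
          ((1:ℝ), y, t) :=
        (hBd (y,t) hz).hasFDerivAt.comp ((1:ℝ), y, t) snd3.hasFDerivAt
      exact (h1.add h2).add h3
    have hψ : HasFDerivAt (fun r : ℝ × ℝ × ℝ => r.1 * p1 B r.2)
        ((1:ℝ) • ((fderiv ℝ (p1 B) (y,t)).comp snd3) + p1 B (y,t) • fst3) ((1:ℝ), y, t) :=
      fst3.hasFDerivAt.mul ((hB1d (y,t) hz).hasFDerivAt.comp ((1:ℝ), y, t) snd3.hasFDerivAt)
    have hfx := hpx_ev.fderiv_eq.trans hφ.fderiv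
    have hfy := hpy_ev.fderiv_eq.trans hψ.fderiv
    have hx1 : px (px G) ((1:ℝ), y, t) = μ := by
      show (fderiv ℝ (px G) ((1:ℝ), y, t)) (1, 0, 0) = μ
      rw [hfx]
      simp only [ContinuousLinearMap.add_apply, ContinuousLinearMap.coe_smul',
        Pi.smul_apply, fst3_apply, t3_apply, ContinuousLinearMap.coe_comp',
        Function.comp_apply, snd3_apply, smul_eq_mul]
      norm_num [Prod.mk_zero_zero]
    have hx2 : pt (px G) ((1:ℝ), y, t) = deriv κ t + p2 B (y,t) := by
      show (fderiv ℝ (px G) ((1:ℝ), y, t)) (0, 0, 1) = deriv κ t + p2 B (y,t)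
      rw [hfx]
      simp only [ContinuousLinearMap.add_apply, ContinuousLinearMap.coe_smul',
        Pi.smul_apply, fst3_apply, t3_apply, ContinuousLinearMap.coe_comp',
        Function.comp_apply, snd3_apply, smul_eq_mul, p2, pd2]
      norm_num
    have hy1 : px (py G) ((1:ℝ), y, t) = p1 B (y,t) := by
      show (fderiv ℝ (py G) ((1:ℝ), y, t)) (1, 0, 0) = p1 B (y,t)
      rw [hfy]
      simp only [ContinuousLinearMap.add_apply, ContinuousLinearMap.coe_smul',
        Pi.smul_apply, fst3_apply, t3_apply, ContinuousLinearMap.coe_comp',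
        Function.comp_apply, snd3_apply, smul_eq_mul]
      norm_num [Prod.mk_zero_zero]
    have hy2 : py (py G) ((1:ℝ), y, t) = p1 (p1 B) (y,t) := by
      show (fderiv ℝ (py G) ((1:ℝ), y, t)) (0, 1, 0) = p1 (p1 B) (y,t)
      rw [hfy]
      simp only [ContinuousLinearMap.add_apply, ContinuousLinearMap.coe_smul',
        Pi.smul_apply, fst3_apply, t3_apply, ContinuousLinearMap.coe_comp',
        Function.comp_apply, snd3_apply, smul_eq_mul, p1, pd2]
      norm_num
    have hE0 : (px (py G) ((1:ℝ), y, t)) ^ 2 - py (py G) ((1:ℝ), y, t) * px (px G) ((1:ℝ), y, t)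
        - pt (px G) ((1:ℝ), y, t) = 0 := hG 1 one_pos y hy t ht
    rw [hx1, hx2, hy1, hy2] at hE0
    linarith
  -- now the β part
  intro y₀ hy₀ t₀ ht₀ β
  have hz₀ : (y₀, t₀) ∈ J ×ˢ K := ⟨hy₀, ht₀⟩
  have hβf : ∀ z ∈ J ×ˢ K, HasFDerivAt β
      ((β z) • (μ⁻¹ • (-(fderiv ℝ B z + deriv κ z.2 • snd2)))) z := by
    intro z hz
    have hu : HasFDerivAt (fun w : ℝ × ℝ => -(B w + κ w.2) / μ)
        (μ⁻¹ • (-(fderiv ℝ B z + deriv κ z.2 • snd2))) z := by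
      have := (((hBd z hz).hasFDerivAt.add
        ((hκd z.2 hz.2).hasDerivAt.comp_hasFDerivAt z snd2.hasFDerivAt)).neg).mul_const μ⁻¹
      exact this
    exact (Real.hasDerivAt_exp _).comp_hasFDerivAt z hu
  have hp1β : ∀ z ∈ J ×ˢ K, p1 β z = β z * (-(p1 B z) * μ⁻¹) := by
    intro z hz
    have := (hβf z hz).fderiv
    simp only [p1, pd2, this]
    simp only [ContinuousLinearMap.add_apply, ContinuousLinearMap.coe_smul',
      Pi.smul_apply, ContinuousLinearMap.neg_apply, snd2_apply, smul_eq_mul]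
    ring
  have hp2β : p2 β (y₀, t₀) = β (y₀, t₀) * (-(p2 B (y₀, t₀) + deriv κ t₀) * μ⁻¹) := by
    have := (hβf (y₀, t₀) hz₀).fderiv
    simp only [p2, pd2, this]
    simp only [ContinuousLinearMap.add_apply, ContinuousLinearMap.coe_smul',
      Pi.smul_apply, ContinuousLinearMap.neg_apply, snd2_apply, smul_eq_mul]
    ring
  have hp1_ev : p1 β =ᶠ[nhds (y₀, t₀)] fun z => β z * (-(p1 B z) * μ⁻¹) :=
    Filter.eventuallyEq_of_mem (hUo.mem_nhds hz₀) hp1β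
  have hχ : HasFDerivAt (fun z : ℝ × ℝ => β z * (-(p1 B z) * μ⁻¹))
      ((β (y₀, t₀)) • (μ⁻¹ • (-(fderiv ℝ (p1 B) (y₀, t₀))))
        + (-(p1 B (y₀, t₀)) * μ⁻¹) • ((β (y₀, t₀)) • (μ⁻¹ •
          (-(fderiv ℝ B (y₀, t₀) + deriv κ t₀ • snd2))))) (y₀, t₀) := by
    have hd2 : HasFDerivAt (fun z : ℝ × ℝ => -(p1 B z) * μ⁻¹)
        (μ⁻¹ • (-(fderiv ℝ (p1 B) (y₀, t₀)))) (y₀, t₀) :=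
      ((hB1d (y₀, t₀) hz₀).hasFDerivAt.neg).mul_const μ⁻¹
    exact (hβf (y₀, t₀) hz₀).mul hd2
  have hp11β : p1 (p1 β) (y₀, t₀) =
      β (y₀, t₀) * (μ⁻¹ * (-(p1 (p1 B) (y₀, t₀))))
        + (-(p1 B (y₀, t₀)) * μ⁻¹) * (β (y₀, t₀) * (μ⁻¹ * (-(p1 B (y₀, t₀))))) := by
    have hf1 := hp1_ev.fderiv_eq.trans hχ.fderiv
    show (fderiv ℝ (p1 β) (y₀, t₀)) (1, 0) =
      β (y₀, t₀) * (μ⁻¹ * (-(p1 (p1 B) (y₀, t₀))))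
        + (-(p1 B (y₀, t₀)) * μ⁻¹) * (β (y₀, t₀) * (μ⁻¹ * (-(p1 B (y₀, t₀)))))
    rw [hf1]
    simp only [ContinuousLinearMap.add_apply, ContinuousLinearMap.coe_smul',
      Pi.smul_apply, ContinuousLinearMap.neg_apply, snd2_apply, smul_eq_mul, p1, pd2]
    ring
  have hE' := hE y₀ hy₀ t₀ ht₀
  have hk : deriv κ t₀ = p1 B (y₀,t₀) ^ 2 - p1 (p1 B) (y₀,t₀) * μ - p2 B (y₀,t₀) := by
    linarith
  rw [hp2β, hp11β, hk]
  field_simp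
  ring
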